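/- Let δ ≥ 0, γ ∈ (0, 1), and let p : [0,∞) → (0, 1] be measurable with 0 < I := ∫_0^∞ e^{−δu} p(u)^{1/γ} du < ∞. Then for every measurable function r : [0,∞) → [0,∞) with ∫_0^∞ e^{−δu} r(u) du ≤ 1, one has ∫_0^∞ e^{−δu} p(u) · r(u)^{1−γ}/(1−γ) du ≤ I^γ/(1−γ), and equality holds for the payout function r*(u) := p(u)^{1/γ}/I, which also satisfies ∫_0^∞ e^{−δu} r*(u) du = 1. -/

import Mathlib

open MeasureTheory

/-- Optimal payout function under a budget constraint: expected discounted CRRA utility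
is at most `I^γ/(1-γ)` for any admissible payout function, with equality for
`r*(u) = p(u)^{1/γ}/I`, which spends the whole budget. -/
theorem stmt_9 (δ γ : ℝ) (hδ : 0 ≤ δ) (hγ0 : 0 < γ) (hγ1 : γ < 1)
    (p : ℝ → ℝ) (hp_meas : Measurable p)
    (hp : ∀ u, 0 ≤ u → 0 < p u ∧ p u ≤ 1)
    (I : ℝ) (hI : I = ∫ u in Set.Ioi (0:ℝ), Real.exp (-δ*u) * p u ^ (1/γ))
    (hI_int : IntegrableOn (fun u => Real.exp (-δ*u) * p u ^ (1/γ)) (Set.Ioi 0))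
    (hIpos : 0 < I) :
    (∀ r : ℝ → ℝ, Measurable r → (∀ u, 0 ≤ r u) →
      (∫⁻ u in Set.Ioi (0:ℝ), ENNReal.ofReal (Real.exp (-δ*u) * r u)) ≤ 1 →
      (∫ u in Set.Ioi (0:ℝ), Real.exp (-δ*u) * p u * r u ^ (1-γ) / (1-γ))
        ≤ I ^ γ / (1-γ)) ∧
    (∫ u in Set.Ioi (0:ℝ), Real.exp (-δ*u) * p u * (p u ^ (1/γ) / I) ^ (1-γ) / (1-γ))
      = I ^ γ / (1-γ) ∧
    (∫ u in Set.Ioi (0:ℝ), Real.exp (-δ*u) * (p u ^ (1/γ) / I)) = 1 := by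
  have h1γ : 0 < 1 - γ := by linarith
  have hexp : Measurable fun u : ℝ => Real.exp (-δ*u) :=
    ((measurable_const.mul measurable_id).exp)
  have hIγ : I * I ^ (γ - 1) = I ^ γ := by
    nth_rewrite 1 [← Real.rpow_one I]
    rw [← Real.rpow_add hIpos]; ring_nf
  have hg_nonneg : ∀ u, 0 ≤ u → 0 ≤ Real.exp (-δ*u) * p u ^ (1/γ) := fun u hu =>
    mul_nonneg (Real.exp_nonneg _) (Real.rpow_nonneg (hp u hu).1.le _)
  have hgl : (∫⁻ u in Set.Ioi (0:ℝ), ENNReal.ofReal (Real.exp (-δ*u) * p u ^ (1/γ)))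
      = ENNReal.ofReal I := by
    rw [hI, ofReal_integral_eq_lintegral_ofReal hI_int]
    filter_upwards [self_mem_ae_restrict measurableSet_Ioi] with u hu
    exact hg_nonneg u (le_of_lt hu)
  refine ⟨?_, ?_, ?_⟩
  · -- Hölder inequality part
    intro r hr hr0 hbudget
    have hdiv : (∫ u in Set.Ioi (0:ℝ), Real.exp (-δ*u) * p u * r u ^ (1-γ) / (1-γ))
        = (∫ u in Set.Ioi (0:ℝ), Real.exp (-δ*u) * p u * r u ^ (1-γ)) / (1-γ) := by
      rw [integral_div]
    rw [hdiv]
    gcongr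
    set F : ℝ → ENNReal := fun u => ENNReal.ofReal (Real.exp (-δ*u) * r u) ^ (1-γ) with hF
    set G : ℝ → ENNReal := fun u => ENNReal.ofReal (Real.exp (-δ*u) * p u ^ (1/γ)) ^ γ with hG
    have hconj : (1/(1-γ)).HolderConjugate (1/γ) := by
      rw [Real.holderConjugate_iff]; constructor
      · rw [lt_div_iff₀ h1γ]; linarith
      · rw [one_div, one_div, inv_inv, inv_inv]; ring
    have hFm : AEMeasurable F (volume.restrict (Set.Ioi (0:ℝ))) :=
      (((hexp.mul hr).ennreal_ofReal).pow_const _).aemeasurable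
    have hGm : AEMeasurable G (volume.restrict (Set.Ioi (0:ℝ))) :=
      (((hexp.mul (hp_meas.pow_const _)).ennreal_ofReal).pow_const _).aemeasurable
    have holder := ENNReal.lintegral_mul_le_Lp_mul_Lq
      (volume.restrict (Set.Ioi (0:ℝ))) hconj hFm hGm
    have hFP : ∀ u, F u ^ (1/(1-γ)) = ENNReal.ofReal (Real.exp (-δ*u) * r u) := by
      intro u
      rw [hF, ← ENNReal.rpow_mul, mul_one_div, div_self h1γ.ne', ENNReal.rpow_one]
    have hGQ : ∀ u, G u ^ (1/γ) = ENNReal.ofReal (Real.exp (-δ*u) * p u ^ (1/γ)) := by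
      intro u
      rw [hG, ← ENNReal.rpow_mul, mul_one_div, div_self hγ0.ne', ENNReal.rpow_one]
    simp only [one_div_one_div] at holder
    simp only [hFP, hGQ] at holder
    have hpt : ∀ u ∈ Set.Ioi (0:ℝ),
        ENNReal.ofReal (Real.exp (-δ*u) * p u * r u ^ (1-γ)) = (F * G) u := by
      intro u hu
      have hu0 : (0:ℝ) ≤ u := le_of_lt hu
      have hpu : 0 < p u := (hp u hu0).1
      have he : (0:ℝ) ≤ Real.exp (-δ*u) := Real.exp_nonneg _
      have hpe : (p u ^ (1/γ)) ^ γ = p u := by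
        rw [← Real.rpow_mul hpu.le, one_div_mul_cancel hγ0.ne', Real.rpow_one]
      have hee : Real.exp (-δ*u) ^ (1-γ) * Real.exp (-δ*u) ^ γ = Real.exp (-δ*u) := by
        rw [← Real.rpow_add (Real.exp_pos _)]; norm_num
      simp only [Pi.mul_apply, hF, hG]
      rw [ENNReal.ofReal_rpow_of_nonneg (mul_nonneg he (hr0 u)) h1γ.le,
          ENNReal.ofReal_rpow_of_nonneg (hg_nonneg u hu0) hγ0.le,
          ← ENNReal.ofReal_mul (Real.rpow_nonneg (mul_nonneg he (hr0 u)) _)]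
      congr 1
      rw [Real.mul_rpow he (hr0 u), Real.mul_rpow he (Real.rpow_nonneg hpu.le _), hpe]
      linear_combination -(p u * r u ^ (1-γ)) * hee
    have hmeas : AEStronglyMeasurable
        (fun u => Real.exp (-δ*u) * p u * r u ^ (1-γ))
        (volume.restrict (Set.Ioi (0:ℝ))) :=
      (((hexp.mul hp_meas).mul (hr.pow_const _)).aestronglyMeasurable)
    have hnn : 0 ≤ᵐ[volume.restrict (Set.Ioi (0:ℝ))]
        fun u => Real.exp (-δ*u) * p u * r u ^ (1-γ) := by
      filter_upwards [self_mem_ae_restrict measurableSet_Ioi] with u hu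
      exact mul_nonneg (mul_nonneg (Real.exp_nonneg _) (hp u (le_of_lt hu)).1.le)
        (Real.rpow_nonneg (hr0 u) _)
    rw [integral_eq_lintegral_of_nonneg_ae hnn hmeas]
    apply ENNReal.toReal_le_of_le_ofReal (Real.rpow_nonneg hIpos.le γ)
    calc (∫⁻ u in Set.Ioi (0:ℝ), ENNReal.ofReal (Real.exp (-δ*u) * p u * r u ^ (1-γ)))
        = ∫⁻ u in Set.Ioi (0:ℝ), (F * G) u :=
          setLIntegral_congr_fun measurableSet_Ioi hpt
      _ ≤ (∫⁻ u in Set.Ioi (0:ℝ), ENNReal.ofReal (Real.exp (-δ*u) * r u)) ^ (1-γ) *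
            (∫⁻ u in Set.Ioi (0:ℝ), ENNReal.ofReal (Real.exp (-δ*u) * p u ^ (1/γ))) ^ γ :=
          holder
      _ ≤ 1 ^ (1-γ) * ENNReal.ofReal I ^ γ := by
          rw [hgl]
          exact mul_le_mul_left (ENNReal.rpow_le_rpow hbudget h1γ.le) _
      _ = ENNReal.ofReal (I ^ γ) := by
          rw [ENNReal.one_rpow, one_mul, ENNReal.ofReal_rpow_of_pos hIpos]
  · -- equality for r*
    have key : Set.EqOn
        (fun u => Real.exp (-δ*u) * p u * (p u ^ (1/γ) / I) ^ (1-γ) / (1-γ))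
        (fun u => (Real.exp (-δ*u) * p u ^ (1/γ)) * (I ^ (γ-1) / (1-γ)))
        (Set.Ioi 0) := by
      intro u hu
      have hpu : 0 < p u := (hp u (le_of_lt hu)).1
      have hIe : I ^ (γ-1) = (I ^ (1-γ))⁻¹ := by
        rw [← Real.rpow_neg hIpos.le]; ring_nf
      have h1 : (p u ^ (1/γ) / I) ^ (1-γ)
          = p u ^ (1/γ - 1) * I ^ (γ - 1) := by
        rw [Real.div_rpow (Real.rpow_nonneg hpu.le _) hIpos.le,
            ← Real.rpow_mul hpu.le, hIe, div_eq_mul_inv]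
        congr 2
        field_simp
      have hp2 : p u * p u ^ (1/γ - 1) = p u ^ (1/γ) := by
        nth_rewrite 1 [← Real.rpow_one (p u)]
        rw [← Real.rpow_add hpu]; ring_nf
      simp only
      rw [h1, ← hp2]; ring
    rw [setIntegral_congr_fun measurableSet_Ioi key, integral_mul_const, ← hI,
        ← mul_div_assoc, hIγ]
  · have h : ∀ u, Real.exp (-δ*u) * (p u ^ (1/γ) / I)
        = (Real.exp (-δ*u) * p u ^ (1/γ)) / I := fun u => by ring
    simp_rw [h]
    rw [integral_div, ← hI, div_self hIpos.ne']
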